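/- Let p be a prime and A a commutative ring on which multiplication by p is injective, equipped with a ring endomorphism φ : A → A satisfying φ(a) ≡ a^p (mod pA) for all a, and assume that R = A/pA is perfect (its Frobenius x ↦ x^p is bijective). Let f : A → 𝕎 A be the unique ring homomorphism with w_n(f(a)) = φ^n(a) for all n, a, and q : A → A/pA the quotient map. Then for every n ≥ 1 the composite truncate_n ∘ 𝕎(q) ∘ f : A → W_n(A/pA) is surjective with kernel p^n A, inducing a ring isomorphism A/p^nA ≅ W_n(A/pA); hence the p-adic completion of A is isomorphic as a topological ring to 𝕎(A/pA). -/

import Mathlib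

noncomputable section

/-- The `n`-th ghost component of a `p`-typical Witt vector:
`w_n(x) = ∑_{i=0}^{n} p^i x_i^{p^{n-i}}`. -/
def ghost (p : ℕ) {A : Type*} [CommRing A] (n : ℕ) (x : WittVector p A) : A :=
  ∑ i ∈ Finset.range (n + 1), (p : A) ^ i * (x.coeff i) ^ (p ^ (n - i))

/-- The inverse limit `lim_n A ⧸ I n` as a subring of the product. -/
def invLimQuot {A : Type*} [CommRing A] (I : ℕ → Ideal A) :
    Subring (∀ n : ℕ, A ⧸ I n) where
  carrier := {x | ∀ (n m : ℕ), n ≤ m → ∀ (hle : I m ≤ I n),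
    Ideal.Quotient.factor hle (x m) = x n}
  zero_mem' := by intro n m h hle; simp
  one_mem' := by intro n m h hle; simp
  add_mem' := by
    intro a b ha hb n m h hle
    simp only [Pi.add_apply, map_add, ha n m h hle, hb n m h hle]
  mul_mem' := by
    intro a b ha hb n m h hle
    simp only [Pi.mul_apply, map_mul, ha n m h hle, hb n m h hle]
  neg_mem' := by
    intro a ha n m h hle
    simp only [Pi.neg_apply, map_neg, ha n m h hle]

/-- Product of discrete topologies. -/
def discPiTop (ι : Type*) (X : ι → Type*) : TopologicalSpace (∀ i, X i) :=
  @Pi.topologicalSpace ι X fun _ => ⊥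

/-- The projective limit topology on `lim_n A ⧸ I n` (each quotient discrete). -/
def limTop {A : Type*} [CommRing A] (I : ℕ → Ideal A) :
    TopologicalSpace (invLimQuot I) :=
  TopologicalSpace.induced Subtype.val (discPiTop ℕ fun n => A ⧸ I n)

/-- The natural topology on `𝕎 R` (`R` discrete): the product topology via
the coefficient map `𝕎 R → R^ℕ`. -/
def wittTop (p : ℕ) (R : Type*) [CommRing R] : TopologicalSpace (WittVector p R) :=
  TopologicalSpace.induced (fun x => x.coeff) (discPiTop ℕ fun _ => R)

namespace Statement13Aux

variable {p : ℕ} [hp : Fact p.Prime] {A R : Type*} [CommRing A] [CommRing R]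

section charp
variable [CharP R p]

theorem coeff_mul_p_pow (y : WittVector p R) {n i : ℕ} (hi : i < n) :
    (y * (p : WittVector p R) ^ n).coeff i = 0 := by
  induction n generalizing y i with
  | zero => omega
  | succ n ih =>
    rw [pow_succ, ← mul_assoc]
    match i with
    | 0 => exact WittVector.mul_charP_coeff_zero _
    | Nat.succ i =>
      rw [WittVector.mul_charP_coeff_succ, ih y (by omega), zero_pow hp.out.ne_zero]

theorem exists_mul_p (hsurjp : ∀ y : R, ∃ c : R, c ^ p = y) (d : WittVector p R)
    (hd : d.coeff 0 = 0) : ∃ w : WittVector p R, w * p = d := by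
  choose c hc using hsurjp
  refine ⟨WittVector.mk p (fun i => c (d.coeff (i + 1))), WittVector.ext fun i => ?_⟩
  match i with
  | 0 => rw [WittVector.mul_charP_coeff_zero, hd]
  | Nat.succ i =>
    rw [WittVector.mul_charP_coeff_succ]
    show c (d.coeff (i + 1)) ^ p = _
    exact hc _

theorem surj_aux (hsurjp : ∀ y : R, ∃ c : R, c ^ p = y)
    (q : A →+* R) (hq : Function.Surjective ⇑q)
    (g : A →+* WittVector p R) (hg0 : ∀ a, (g a).coeff 0 = q a) (n : ℕ) :
    Function.Surjective ⇑((WittVector.truncate n).comp g) := by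
  induction n with
  | zero => exact fun y => ⟨0, TruncatedWittVector.ext fun i => i.elim0⟩
  | succ n ih =>
    intro y
    obtain ⟨x, rfl⟩ := WittVector.truncate_surjective (p := p) (n + 1) R y
    obtain ⟨a, ha⟩ := hq (x.coeff 0)
    have hd0 : (x - g a).coeff 0 = 0 := by
      have h := map_sub (WittVector.constantCoeff : WittVector p R →+* R) x (g a)
      simp only [WittVector.constantCoeff_apply] at h
      rw [h, hg0, ha, sub_self]
    obtain ⟨w, hw⟩ := exists_mul_p hsurjp _ hd0
    obtain ⟨b, hb⟩ := ih (WittVector.truncate n w)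
    rw [RingHom.comp_apply] at hb
    refine ⟨a + (p : A) * b, ?_⟩
    have hwb : ∀ i < n, (w - g b).coeff i = 0 := by
      intro i hi
      have h2 : WittVector.truncate n (w - g b) = 0 := by
        rw [map_sub, hb, sub_self]
      exact (WittVector.mem_ker_truncate n (w - g b)).1 h2 i hi
    have hx : x - g (a + (p : A) * b) = (w - g b) * (p : WittVector p R) := by
      rw [map_add, map_mul, map_natCast, sub_add_eq_sub_sub, ← hw]; ring
    have h0 : WittVector.truncate (n + 1) (x - g (a + (p : A) * b)) = 0 := by
      rw [hx, ← RingHom.mem_ker, WittVector.mem_ker_truncate]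
      intro i hi
      match i with
      | 0 => exact WittVector.mul_charP_coeff_zero _
      | Nat.succ i =>
        rw [WittVector.mul_charP_coeff_succ, hwb i (by omega), zero_pow hp.out.ne_zero]
    rw [map_sub, sub_eq_zero] at h0
    exact h0.symm

theorem le_ker_aux (g : A →+* WittVector p R) (n : ℕ) :
    Ideal.span {(p : A)} ^ n ≤ RingHom.ker ((WittVector.truncate n).comp g) := by
  rw [Ideal.span_singleton_pow, Ideal.span_le, Set.singleton_subset_iff]
  rw [SetLike.mem_coe, RingHom.mem_ker, RingHom.comp_apply, map_pow, map_natCast,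
    ← RingHom.mem_ker, WittVector.mem_ker_truncate]
  intro i hi
  have h := coeff_mul_p_pow (1 : WittVector p R) hi
  rwa [one_mul] at h

theorem ker_le_aux (hinjp : ∀ x : R, x ^ p = 0 → x = 0)
    (q : A →+* R) (hqa : ∀ a, q a = 0 → ∃ c : A, c * (p : A) = a)
    (g : A →+* WittVector p R) (hg0 : ∀ a, (g a).coeff 0 = q a) (n : ℕ) :
    RingHom.ker ((WittVector.truncate n).comp g) ≤ Ideal.span {(p : A)} ^ n := by
  induction n with
  | zero => intro a _; simp [pow_zero, Ideal.one_eq_top]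
  | succ n ih =>
    intro a haa
    rw [RingHom.mem_ker, RingHom.comp_apply] at haa
    have h0 : q a = 0 := by
      rw [← hg0]
      exact (WittVector.mem_ker_truncate (n + 1) (g a)).1 haa 0 (Nat.succ_pos n)
    obtain ⟨c, rfl⟩ := hqa a h0
    have hgc : WittVector.truncate n (g c) = 0 := by
      rw [← RingHom.mem_ker, WittVector.mem_ker_truncate]
      intro i hi
      apply hinjp
      have hcp : g (c * (p : A)) = g c * (p : WittVector p R) := by
        rw [map_mul, map_natCast]
      have h1 : (g c * (p : WittVector p R)).coeff (i + 1) = 0 := by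
        rw [← hcp]
        exact (WittVector.mem_ker_truncate (n + 1) _).1 haa (i + 1) (by omega)
      rwa [WittVector.mul_charP_coeff_succ] at h1
    have hc : c ∈ Ideal.span {(p : A)} ^ n := by
      apply ih
      rw [RingHom.mem_ker, RingHom.comp_apply, hgc]
    rw [pow_succ]
    exact Ideal.mul_mem_mul hc (Ideal.mem_span_singleton_self _)

end charp

end Statement13Aux

/-- Let `p` be prime and `A` a commutative ring on which multiplication by
`p` is injective, with a Frobenius lift `φ`, such that `R = A/pA` is perfect.
Let `f : A → 𝕎 A` be the unique ring homomorphism with `w_n(f a) = φ^n(a)`.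
Then for every `n ≥ 1` the composite `truncate_n ∘ 𝕎(q) ∘ f : A → W_n(A/pA)`
is surjective with kernel `p^n A`, inducing `A/p^nA ≅ W_n(A/pA)`; hence the
`p`-adic completion of `A` is isomorphic as a topological ring to
`𝕎(A/pA)`. -/
theorem statement13 (p : ℕ) [Fact p.Prime] (A : Type*) [CommRing A]
    (htf : ∀ x : A, (p : A) * x = 0 → x = 0)
    (φ : A →+* A) (hφ : ∀ a : A, (p : A) ∣ (φ a - a ^ p))
    (hperfect : Function.Bijective
      fun x : A ⧸ Ideal.span {(p : A)} => x ^ p)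
    (f : A →+* WittVector p A)
    (hf : ∀ (n : ℕ) (a : A), ghost p n (f a) = (⇑φ)^[n] a) :
    (∀ n : ℕ, 1 ≤ n →
      Function.Surjective ((WittVector.truncate n).comp
        ((WittVector.map (Ideal.Quotient.mk (Ideal.span {(p : A)}))).comp f)) ∧
      RingHom.ker ((WittVector.truncate n).comp
        ((WittVector.map (Ideal.Quotient.mk (Ideal.span {(p : A)}))).comp f)) =
        Ideal.span {(p : A)} ^ n) ∧
    (∀ n : ℕ, 1 ≤ n →
      ∃ e : (A ⧸ Ideal.span {(p : A)} ^ n) ≃+*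
          TruncatedWittVector p n (A ⧸ Ideal.span {(p : A)}),
        ∀ a : A, e (Ideal.Quotient.mk (Ideal.span {(p : A)} ^ n) a) =
          WittVector.truncate n
            (WittVector.map (Ideal.Quotient.mk (Ideal.span {(p : A)})) (f a))) ∧
    (∃ e : invLimQuot (fun n => Ideal.span {(p : A)} ^ (n + 1)) ≃+*
        WittVector p (A ⧸ Ideal.span {(p : A)}),
      @Continuous _ _ (limTop fun n => Ideal.span {(p : A)} ^ (n + 1))
        (wittTop p (A ⧸ Ideal.span {(p : A)})) e ∧
      @Continuous _ _ (wittTop p (A ⧸ Ideal.span {(p : A)}))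
        (limTop fun n => Ideal.span {(p : A)} ^ (n + 1)) e.symm ∧
      ∀ a : A,
        e ⟨fun n => Ideal.Quotient.mk (Ideal.span {(p : A)} ^ (n + 1)) a,
            by intro n m h hle; simp⟩ =
          WittVector.map (Ideal.Quotient.mk (Ideal.span {(p : A)})) (f a)) := by
  classical
  have hp' : p.Prime := Fact.out
  have hc0 : ∀ a : A, (f a).coeff 0 = a := by
    intro a
    have h := hf 0 a
    simpa [ghost] using h
  have hg0 : ∀ a : A,
      (((WittVector.map (Ideal.Quotient.mk (Ideal.span {(p : A)}))).comp f) a).coeff 0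
        = Ideal.Quotient.mk (Ideal.span {(p : A)}) a := by
    intro a
    rw [RingHom.comp_apply, WittVector.map_coeff, hc0]
  have key : (∀ n : ℕ, Function.Surjective ⇑((WittVector.truncate n).comp
        ((WittVector.map (Ideal.Quotient.mk (Ideal.span {(p : A)}))).comp f))) ∧
      (∀ n : ℕ, RingHom.ker ((WittVector.truncate n).comp
        ((WittVector.map (Ideal.Quotient.mk (Ideal.span {(p : A)}))).comp f))
        = Ideal.span {(p : A)} ^ n) := by
    by_cases hS : Subsingleton (A ⧸ Ideal.span {(p : A)})
    · have hTop : Ideal.span {(p : A)} = ⊤ := by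
        rw [Ideal.eq_top_iff_one, ← Ideal.Quotient.eq_zero_iff_mem]
        exact Subsingleton.elim _ _
      haveI hWS : ∀ n, Subsingleton (TruncatedWittVector p n (A ⧸ Ideal.span {(p : A)})) :=
        fun n => ⟨fun x y => TruncatedWittVector.ext fun i => Subsingleton.elim _ _⟩
      constructor
      · exact fun n y => ⟨0, Subsingleton.elim _ _⟩
      · intro n
        have h2 : Ideal.span {(p : A)} ^ n = (⊤ : Ideal A) := by
          rw [hTop]; exact Ideal.top_pow A n
        rw [h2, Ideal.eq_top_iff_one, RingHom.mem_ker]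
        exact Subsingleton.elim _ _
    · haveI : Nontrivial (A ⧸ Ideal.span {(p : A)}) := not_subsingleton_iff_nontrivial.mp hS
      haveI : CharP (A ⧸ Ideal.span {(p : A)}) p := by
        rw [CharP.charP_iff_prime_eq_zero hp']
        rw [← map_natCast (Ideal.Quotient.mk (Ideal.span {(p : A)})) p,
          Ideal.Quotient.eq_zero_iff_mem]
        exact Ideal.mem_span_singleton_self _
      have hsurjp : ∀ y : A ⧸ Ideal.span {(p : A)}, ∃ c, c ^ p = y := fun y => hperfect.2 y
      have hinjp : ∀ x : A ⧸ Ideal.span {(p : A)}, x ^ p = 0 → x = 0 := by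
        intro x hx
        apply hperfect.1
        show x ^ p = (0 : A ⧸ Ideal.span {(p : A)}) ^ p
        rw [hx, zero_pow hp'.ne_zero]
      have hqa : ∀ a : A, Ideal.Quotient.mk (Ideal.span {(p : A)}) a = 0 →
          ∃ c : A, c * (p : A) = a :=
        fun a h => Ideal.mem_span_singleton'.mp (Ideal.Quotient.eq_zero_iff_mem.mp h)
      exact ⟨Statement13Aux.surj_aux hsurjp _ Ideal.Quotient.mk_surjective _ hg0,
        fun n => le_antisymm (Statement13Aux.ker_le_aux hinjp _ hqa _ hg0 n)
          (Statement13Aux.le_ker_aux _ n)⟩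
  -- the isomorphisms on truncated levels
  let E : ∀ n : ℕ, (A ⧸ Ideal.span {(p : A)} ^ n) ≃+*
      TruncatedWittVector p n (A ⧸ Ideal.span {(p : A)}) :=
    fun n => (Ideal.quotEquivOfEq (key.2 n).symm).trans
      (RingHom.quotientKerEquivOfSurjective (key.1 n))
  have hE : ∀ (n : ℕ) (a : A), E n (Ideal.Quotient.mk (Ideal.span {(p : A)} ^ n) a)
      = WittVector.truncate n
          (WittVector.map (Ideal.Quotient.mk (Ideal.span {(p : A)})) (f a)) := by
    intro n a
    show (RingHom.quotientKerEquivOfSurjective (key.1 n))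
        ((Ideal.quotEquivOfEq (key.2 n).symm) (Ideal.Quotient.mk _ a)) = _
    rw [Ideal.quotEquivOfEq_mk]
    exact RingHom.kerLift_mk ((WittVector.truncate n).comp
      ((WittVector.map (Ideal.Quotient.mk (Ideal.span {(p : A)}))).comp f)) a
  have hEcomp : ∀ (n m : ℕ) (h : n ≤ m) (x : A ⧸ Ideal.span {(p : A)} ^ (m + 1)),
      TruncatedWittVector.truncate (Nat.succ_le_succ h) (E (m + 1) x)
        = E (n + 1) (Ideal.Quotient.factor
            (Ideal.pow_le_pow_right (Nat.succ_le_succ h)) x) := by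
    intro n m h x
    obtain ⟨a, rfl⟩ := Ideal.Quotient.mk_surjective x
    rw [hE, Ideal.Quotient.factor_mk, hE, TruncatedWittVector.truncate_wittVector_truncate]
  let u : ∀ k : ℕ, ↥(invLimQuot (fun n => Ideal.span {(p : A)} ^ (n + 1))) →+*
      TruncatedWittVector p k (A ⧸ Ideal.span {(p : A)}) :=
    fun k => (TruncatedWittVector.truncate (Nat.le_succ k)).comp
      ((E (k + 1)).toRingHom.comp
        ((Pi.evalRingHom (fun n : ℕ => A ⧸ Ideal.span {(p : A)} ^ (n + 1)) k).comp
          (Subring.subtype _)))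
  have hu : ∀ (k : ℕ) (x : ↥(invLimQuot (fun n => Ideal.span {(p : A)} ^ (n + 1)))),
      u k x = TruncatedWittVector.truncate (Nat.le_succ k) (E (k + 1) (x.1 k)) :=
    fun k x => rfl
  have hucompat : ∀ (k₁ k₂ : ℕ) (hk : k₁ ≤ k₂),
      (TruncatedWittVector.truncate hk).comp (u k₂) = u k₁ := by
    intro k₁ k₂ hk
    ext x
    rw [RingHom.comp_apply, hu, hu, TruncatedWittVector.truncate_truncate,
      ← TruncatedWittVector.truncate_truncate (Nat.le_succ k₁) (Nat.succ_le_succ hk),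
      hEcomp k₁ k₂ hk,
      x.2 k₁ k₂ hk (Ideal.pow_le_pow_right (Nat.succ_le_succ hk))]
  let L : ↥(invLimQuot (fun n => Ideal.span {(p : A)} ^ (n + 1))) →+*
      WittVector p (A ⧸ Ideal.span {(p : A)}) :=
    WittVector.lift u hucompat
  have hL : ∀ (k : ℕ) (x : ↥(invLimQuot (fun n => Ideal.span {(p : A)} ^ (n + 1)))),
      WittVector.truncate k (L x) = u k x := fun k x => WittVector.truncate_lift (n := k) (f_compat := hucompat) x
  have hLE : ∀ (k : ℕ) (x : ↥(invLimQuot (fun n => Ideal.span {(p : A)} ^ (n + 1)))),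
      WittVector.truncate (k + 1) (L x) = E (k + 1) (x.1 k) := by
    intro k x
    rw [hL, hu, hEcomp k (k + 1) (Nat.le_succ k),
      x.2 k (k + 1) (Nat.le_succ k) (Ideal.pow_le_pow_right (Nat.succ_le_succ (Nat.le_succ k)))]
  have hinj : Function.Injective ⇑L := by
    intro x y hxy
    apply Subtype.ext
    funext k
    apply (E (k + 1)).injective
    rw [← hLE k x, ← hLE k y, hxy]
  have hmem : ∀ w : WittVector p (A ⧸ Ideal.span {(p : A)}),
      (fun n => (E (n + 1)).symm (WittVector.truncate (n + 1) w)) ∈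
        invLimQuot (fun n => Ideal.span {(p : A)} ^ (n + 1)) := by
    intro w n m h hle
    apply (E (n + 1)).injective
    rw [← hEcomp n m h, RingEquiv.apply_symm_apply, RingEquiv.apply_symm_apply,
      TruncatedWittVector.truncate_wittVector_truncate]
  have hsurjL : Function.Surjective ⇑L := by
    intro w
    refine ⟨⟨fun n => (E (n + 1)).symm (WittVector.truncate (n + 1) w), hmem w⟩, ?_⟩
    apply WittVector.ext
    intro i
    have h1 := hLE i ⟨fun n => (E (n + 1)).symm (WittVector.truncate (n + 1) w), hmem w⟩
    rw [RingEquiv.apply_symm_apply] at h1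
    have h2 := congrArg (TruncatedWittVector.coeff ⟨i, Nat.lt_succ_self i⟩) h1
    simpa using h2
  refine ⟨fun n _ => ⟨key.1 n, key.2 n⟩, fun n _ => ⟨E n, hE n⟩,
    RingEquiv.ofBijective L ⟨hinj, hsurjL⟩, ?_, ?_, ?_⟩
  · -- forward continuity
    letI : TopologicalSpace (A ⧸ Ideal.span {(p : A)}) := ⊥
    haveI : DiscreteTopology (A ⧸ Ideal.span {(p : A)}) := ⟨rfl⟩
    letI : ∀ n : ℕ, TopologicalSpace (A ⧸ Ideal.span {(p : A)} ^ (n + 1)) := fun _ => ⊥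
    haveI : ∀ n : ℕ, DiscreteTopology (A ⧸ Ideal.span {(p : A)} ^ (n + 1)) := fun _ => ⟨rfl⟩
    refine continuous_induced_rng.mpr (continuous_pi fun i => ?_)
    have hcoord : ∀ x : ↥(invLimQuot (fun n => Ideal.span {(p : A)} ^ (n + 1))),
        (L x).coeff i =
          TruncatedWittVector.coeff ⟨i, Nat.lt_succ_self i⟩ (E (i + 1) (x.1 i)) := by
      intro x
      rw [← hLE i x, WittVector.coeff_truncate]
    have hc1 : Continuous ((fun c : A ⧸ Ideal.span {(p : A)} ^ (i + 1) =>
        TruncatedWittVector.coeff ⟨i, Nat.lt_succ_self i⟩ (E (i + 1) c)) ∘ (fun v => v i) ∘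
        (Subtype.val : ↥(invLimQuot (fun n => Ideal.span {(p : A)} ^ (n + 1))) →
          ∀ n : ℕ, A ⧸ Ideal.span {(p : A)} ^ (n + 1))) :=
      continuous_of_discreteTopology.comp ((continuous_apply i).comp continuous_subtype_val)
    exact hc1.congr fun x => (hcoord x).symm
  · -- reverse continuity
    letI : TopologicalSpace (A ⧸ Ideal.span {(p : A)}) := ⊥
    haveI : DiscreteTopology (A ⧸ Ideal.span {(p : A)}) := ⟨rfl⟩
    letI : ∀ n : ℕ, TopologicalSpace (A ⧸ Ideal.span {(p : A)} ^ (n + 1)) := fun _ => ⊥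
    haveI : ∀ n : ℕ, DiscreteTopology (A ⧸ Ideal.span {(p : A)} ^ (n + 1)) := fun _ => ⟨rfl⟩
    letI : TopologicalSpace (WittVector p (A ⧸ Ideal.span {(p : A)})) :=
      wittTop p (A ⧸ Ideal.span {(p : A)})
    refine continuous_induced_rng.mpr (continuous_pi fun n => ?_)
    have hsymm : ∀ w : WittVector p (A ⧸ Ideal.span {(p : A)}),
        ((RingEquiv.ofBijective L ⟨hinj, hsurjL⟩).symm w).1 n
          = (E (n + 1)).symm (WittVector.truncate (n + 1) w) := by
      intro w
      apply (E (n + 1)).injective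
      rw [RingEquiv.apply_symm_apply]
      have h2 := hLE n ((RingEquiv.ofBijective L ⟨hinj, hsurjL⟩).symm w)
      rw [show L ((RingEquiv.ofBijective L ⟨hinj, hsurjL⟩).symm w) = w from
        (RingEquiv.ofBijective L ⟨hinj, hsurjL⟩).apply_symm_apply w] at h2
      exact h2.symm
    have htr : ∀ w : WittVector p (A ⧸ Ideal.span {(p : A)}),
        WittVector.truncate (n + 1) w
          = TruncatedWittVector.mk p (fun j : Fin (n + 1) => w.coeff (j : ℕ)) :=
      fun w => TruncatedWittVector.ext fun j => by
        rw [WittVector.coeff_truncate, TruncatedWittVector.coeff_mk]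
    have hcont2 : Continuous (fun w : WittVector p (A ⧸ Ideal.span {(p : A)}) =>
        fun j : Fin (n + 1) => w.coeff (j : ℕ)) :=
      continuous_pi fun j => (continuous_apply ((j : ℕ))).comp continuous_induced_dom
    have hc1 : Continuous ((fun v : Fin (n + 1) → (A ⧸ Ideal.span {(p : A)}) =>
        (E (n + 1)).symm (TruncatedWittVector.mk p v)) ∘
        (fun w : WittVector p (A ⧸ Ideal.span {(p : A)}) =>
          fun j : Fin (n + 1) => w.coeff (j : ℕ))) :=
      continuous_of_discreteTopology.comp hcont2
    exact hc1.congr fun w =>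
      ((hsymm w).trans (congrArg (E (n + 1)).symm (htr w))).symm
  · intro a
    apply WittVector.ext
    intro i
    have h1 := hLE i ⟨fun n => Ideal.Quotient.mk (Ideal.span {(p : A)} ^ (n + 1)) a,
      by intro n m h hle; simp⟩
    rw [hE] at h1
    have h2 := congrArg (TruncatedWittVector.coeff ⟨i, Nat.lt_succ_self i⟩) h1
    simp at h2; exact h2

end
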